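/- arXiv:1806.02924 — 2 statements merged into one kernel-verified Lean document; each statement's English description precedes it below -/
import Mathlib

section
/- Fix ξ > 0 and u ∈ [0,1). The function h₁(z) = log(1 + e^{-(1-u)z - uξ}) - log(1 + e^{-z}) is monotonically increasing on (-∞, ξ). -/
theorem h1_monotone (ξ u : ℝ) (hξ : 0 < ξ) (hu : u ∈ Set.Ico (0:ℝ) 1) :
    MonotoneOn
      (fun z : ℝ =>
        Real.log (1 + Real.exp (-(1 - u) * z - u * ξ)) - Real.log (1 + Real.exp (-z)))
      (Set.Iio ξ) := by
  obtain ⟨hu0, hu1⟩ := hu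
  have key : ∀ x : ℝ, HasDerivAt (fun z : ℝ =>
      Real.log (1 + Real.exp (-(1 - u) * z - u * ξ)) - Real.log (1 + Real.exp (-z)))
      ((Real.exp (-(1 - u) * x - u * ξ) * (-(1 - u))) / (1 + Real.exp (-(1 - u) * x - u * ξ))
        - (Real.exp (-x) * (-1)) / (1 + Real.exp (-x))) x := by
    intro x
    have h1 : HasDerivAt (fun z : ℝ => -(1 - u) * z - u * ξ) (-(1 - u)) x := by
      simpa using ((hasDerivAt_id x).const_mul (-(1 - u))).sub_const (u * ξ)
    have h2 := (h1.exp.const_add 1).log (by positivity)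
    have h3 : HasDerivAt (fun z : ℝ => -z) (-1 : ℝ) x := by
      exact hasDerivAt_neg x
    have h4 := (h3.exp.const_add 1).log (by positivity)
    exact h2.sub h4
  apply monotoneOn_of_deriv_nonneg (convex_Iio ξ)
  · exact fun x _ => (key x).continuousAt.continuousWithinAt
  · exact fun x _ => (key x).differentiableAt.differentiableWithinAt
  · intro x hx
    rw [interior_Iio] at hx
    have hxξ : x ≤ ξ := le_of_lt hx
    rw [(key x).deriv]
    set A := Real.exp (-(1 - u) * x - u * ξ) with hAdef
    set B := Real.exp (-x) with hBdef
    have hA : 0 < A := Real.exp_pos _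
    have hB : 0 < B := Real.exp_pos _
    have hAB : A ≤ B := by
      rw [hAdef, hBdef]
      apply Real.exp_le_exp.mpr
      nlinarith
    have h5 : A / (1 + A) ≤ B / (1 + B) := by
      rw [div_le_div_iff₀ (by positivity) (by positivity)]
      nlinarith
    have e1 : A * (-(1 - u)) / (1 + A) = -(1 - u) * (A / (1 + A)) := by ring
    have e2 : B * (-1) / (1 + B) = -(B / (1 + B)) := by ring
    rw [e1, e2]
    have hq : 0 ≤ A / (1 + A) := by positivity
    nlinarith
end

section
/- In the Gaussian mixture model x | y ~ N(y·w*, σ²I_d) with equal class priors, for a linear classifier f_w(x) = wᵀx with w ≠ 0 and L_∞-bounded adversary of radius ε ≥ 0, the old-definition adversarial 0-1 risk equals G_{adv,0-1}(f_w) = Φ((‖w‖₁ε - wᵀw*)/(σ‖w‖₂)) (counting points where some perturbation δ with ‖δ‖_∞ ≤ ε makes the classifier err on label y). -/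
open MeasureTheory ProbabilityTheory Matrix

/-- The standard normal CDF. -/
noncomputable def stdGaussCDF (t : ℝ) : ℝ := (gaussianReal 0 1 (Set.Iic t)).toReal

open scoped NNReal ENNReal

section AuxGauss
open Real

lemma pdf_mul (m₁ m₂ y x : ℝ) {v₁ v₂ : ℝ≥0} (h₁ : v₁ ≠ 0) (h₂ : v₂ ≠ 0) :
    gaussianPDFReal m₁ v₁ x * gaussianPDFReal (m₂ + x) v₂ y
      = gaussianPDFReal (m₁ + m₂) (v₁ + v₂) y *
        gaussianPDFReal (m₁ + v₁ * (y - m₁ - m₂) / (v₁ + v₂)) (v₁ * v₂ / (v₁ + v₂)) x := by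
  have ha : (0:ℝ) < v₁ := lt_of_le_of_ne v₁.coe_nonneg (by exact_mod_cast h₁.symm)
  have hb : (0:ℝ) < v₂ := lt_of_le_of_ne v₂.coe_nonneg (by exact_mod_cast h₂.symm)
  have hab : (0:ℝ) < (v₁:ℝ) + v₂ := by linarith
  simp only [gaussianPDFReal, NNReal.coe_add, NNReal.coe_div, NNReal.coe_mul]
  have key1 : (√(2 * π * (v₁:ℝ)))⁻¹ * (√(2 * π * (v₂:ℝ)))⁻¹
      = (√(2 * π * ((v₁:ℝ) + v₂)))⁻¹ * (√(2 * π * ((v₁:ℝ) * v₂ / ((v₁:ℝ) + v₂))))⁻¹ := by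
    rw [← mul_inv, ← mul_inv, ← Real.sqrt_mul (by positivity), ← Real.sqrt_mul (by positivity)]
    congr 1
    field_simp
  have key2 : -(x - m₁) ^ 2 / (2 * (v₁:ℝ)) + -(y - (m₂ + x)) ^ 2 / (2 * (v₂:ℝ))
      = -(y - (m₁ + m₂)) ^ 2 / (2 * ((v₁:ℝ) + v₂)) +
        -(x - (m₁ + (v₁:ℝ) * (y - m₁ - m₂) / ((v₁:ℝ) + v₂))) ^ 2
          / (2 * ((v₁:ℝ) * v₂ / ((v₁:ℝ) + v₂))) := by
    field_simp
    ring
  calc (√(2 * π * (v₁:ℝ)))⁻¹ * rexp (-(x - m₁) ^ 2 / (2 * (v₁:ℝ))) *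
        ((√(2 * π * (v₂:ℝ)))⁻¹ * rexp (-(y - (m₂ + x)) ^ 2 / (2 * (v₂:ℝ))))
      = (√(2 * π * (v₁:ℝ)))⁻¹ * (√(2 * π * (v₂:ℝ)))⁻¹ *
        rexp (-(x - m₁) ^ 2 / (2 * (v₁:ℝ)) + -(y - (m₂ + x)) ^ 2 / (2 * (v₂:ℝ))) := by
        rw [Real.exp_add]; ring
    _ = _ := by rw [key1, key2, Real.exp_add]; ring

lemma lintegral_pdf_mul (m₁ m₂ : ℝ) {v₁ v₂ : ℝ≥0} (h₁ : v₁ ≠ 0) (h₂ : v₂ ≠ 0) (y : ℝ) :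
    ∫⁻ x, gaussianPDF m₁ v₁ x * gaussianPDF (m₂ + x) v₂ y
      = gaussianPDF (m₁ + m₂) (v₁ + v₂) y := by
  have hv' : v₁ * v₂ / (v₁ + v₂) ≠ 0 := by
    rw [div_ne_zero_iff]
    exact ⟨mul_ne_zero h₁ h₂, by simp [h₁]⟩
  simp only [gaussianPDF]
  calc ∫⁻ x, ENNReal.ofReal (gaussianPDFReal m₁ v₁ x) *
        ENNReal.ofReal (gaussianPDFReal (m₂ + x) v₂ y)
      = ∫⁻ x, ENNReal.ofReal (gaussianPDFReal (m₁ + m₂) (v₁ + v₂) y) *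
          ENNReal.ofReal (gaussianPDFReal (m₁ + v₁ * (y - m₁ - m₂) / (v₁ + v₂))
            (v₁ * v₂ / (v₁ + v₂)) x) := by
        congr 1; ext x
        rw [← ENNReal.ofReal_mul (gaussianPDFReal_nonneg _ _ _),
          ← ENNReal.ofReal_mul (gaussianPDFReal_nonneg _ _ _), pdf_mul m₁ m₂ y x h₁ h₂]
    _ = ENNReal.ofReal (gaussianPDFReal (m₁ + m₂) (v₁ + v₂) y) *
          ∫⁻ x, ENNReal.ofReal (gaussianPDFReal (m₁ + v₁ * (y - m₁ - m₂) / (v₁ + v₂))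
            (v₁ * v₂ / (v₁ + v₂)) x) := by
        rw [lintegral_const_mul _ ((measurable_gaussianPDFReal _ _).ennreal_ofReal)]
    _ = _ := by rw [lintegral_gaussianPDFReal_eq_one _ hv', mul_one]

lemma gaussian_conv (m₁ m₂ : ℝ) (v₁ v₂ : ℝ≥0) :
    Measure.conv (gaussianReal m₁ v₁) (gaussianReal m₂ v₂)
      = gaussianReal (m₁ + m₂) (v₁ + v₂) := by
  classical
  by_cases h₁ : v₁ = 0
  · subst h₁
    rw [zero_add, gaussianReal_zero_var, Measure.conv, Measure.dirac_prod,
      Measure.map_map (by fun_prop) (by fun_prop)]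
    have : ((fun p : ℝ × ℝ => p.1 + p.2) ∘ (Prod.mk m₁)) = (m₁ + ·) := rfl
    rw [this, gaussianReal_map_const_add, add_comm]
  by_cases h₂ : v₂ = 0
  · subst h₂
    rw [add_zero, gaussianReal_zero_var, Measure.conv, Measure.prod_dirac,
      Measure.map_map (by fun_prop) (by fun_prop)]
    have : ((fun p : ℝ × ℝ => p.1 + p.2) ∘ (fun x : ℝ => (x, m₂))) = (· + m₂) := rfl
    rw [this, gaussianReal_map_add_const]
  ext s hs
  have hF : Measurable fun p : ℝ × ℝ =>
      Set.indicator s (fun _ : ℝ => (1 : ℝ≥0∞)) p.2 *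
        ENNReal.ofReal (gaussianPDFReal m₂ v₂ (p.2 - p.1)) := by
    apply Measurable.mul
    · exact ((measurable_indicator_const_iff 1).mpr hs).comp measurable_snd
    · exact ((measurable_gaussianPDFReal _ _).comp
        (measurable_snd.sub measurable_fst)).ennreal_ofReal
  have hsum : v₁ + v₂ ≠ 0 := by simp [h₁]
  set S1 : ℝ → ℝ≥0∞ := Set.indicator s (fun _ => (1 : ℝ≥0∞)) with hS1
  set G : ℝ → ℝ≥0∞ := fun t => ENNReal.ofReal (gaussianPDFReal m₂ v₂ t) with hG
  have step1 : ∀ x : ℝ, gaussianReal m₂ v₂ (Prod.mk x ⁻¹' ((fun p : ℝ × ℝ => p.1 + p.2) ⁻¹' s))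
      = ∫⁻ y, S1 y * G (y - x) := by
    intro x
    have hpre : Prod.mk x ⁻¹' ((fun p : ℝ × ℝ => p.1 + p.2) ⁻¹' s) = (x + ·) ⁻¹' s := rfl
    rw [hpre, ← Measure.map_apply (by fun_prop) hs, gaussianReal_map_const_add,
      gaussianReal_apply _ h₂ s, ← lintegral_indicator hs]
    congr 1; ext y
    rw [hS1, Set.indicator_apply, Set.indicator_apply]
    split
    · rw [one_mul, hG]
      simp only [gaussianPDF, gaussianPDFReal_sub]
    · rw [zero_mul]
  have hFy : ∀ x : ℝ, Measurable fun y => S1 y * G (y - x) := by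
    intro x
    exact hF.comp (measurable_const.prodMk measurable_id)
  have hg : Measurable fun x : ℝ => ∫⁻ y, S1 y * G (y - x) :=
    Measurable.lintegral_prod_right (f := fun x y => S1 y * G (y - x)) hF
  have inner : ∀ y : ℝ, ∫⁻ x, gaussianPDF m₁ v₁ x * G (y - x)
      = gaussianPDF (m₁ + m₂) (v₁ + v₂) y := by
    intro y
    have : ∀ x : ℝ, G (y - x) = gaussianPDF (m₂ + x) v₂ y := by
      intro x; rw [hG]; simp only [gaussianPDF, gaussianPDFReal_sub]
    simp_rw [this]
    exact lintegral_pdf_mul m₁ m₂ h₁ h₂ y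
  rw [Measure.conv, Measure.map_apply (by fun_prop) hs,
    Measure.prod_apply (hs.preimage (by fun_prop))]
  calc ∫⁻ x, gaussianReal m₂ v₂ (Prod.mk x ⁻¹' ((fun p : ℝ × ℝ => p.1 + p.2) ⁻¹' s))
        ∂(gaussianReal m₁ v₁)
      = ∫⁻ x, (∫⁻ y, S1 y * G (y - x)) ∂(gaussianReal m₁ v₁) := lintegral_congr step1
    _ = ∫⁻ x, (gaussianPDF m₁ v₁ * fun x' => ∫⁻ y, S1 y * G (y - x')) x := by
        rw [gaussianReal_of_var_ne_zero _ h₁]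
        exact lintegral_withDensity_eq_lintegral_mul _ (measurable_gaussianPDF _ _) hg
    _ = ∫⁻ x, gaussianPDF m₁ v₁ x * ∫⁻ y, S1 y * G (y - x) := by
        simp only [Pi.mul_apply]
    _ = ∫⁻ x, ∫⁻ y, gaussianPDF m₁ v₁ x * (S1 y * G (y - x)) := by
        congr 1; ext x; rw [lintegral_const_mul _ (hFy x)]
    _ = ∫⁻ y, ∫⁻ x, gaussianPDF m₁ v₁ x * (S1 y * G (y - x)) := by
        refine lintegral_lintegral_swap ?_
        exact (((measurable_gaussianPDF m₁ v₁).comp measurable_fst).mul hF).aemeasurable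
    _ = ∫⁻ y, S1 y * ∫⁻ x, gaussianPDF m₁ v₁ x * G (y - x) := by
        refine lintegral_congr fun y => ?_
        have meas : Measurable fun x : ℝ => gaussianPDF m₁ v₁ x * G (y - x) :=
          (measurable_gaussianPDF m₁ v₁).mul
            (((measurable_gaussianPDFReal m₂ v₂).ennreal_ofReal).comp
              (measurable_const.sub measurable_id))
        rw [← lintegral_const_mul _ meas]
        exact lintegral_congr fun x => by ring
    _ = ∫⁻ y, S1 y * gaussianPDF (m₁ + m₂) (v₁ + v₂) y := by simp_rw [inner]
    _ = gaussianReal (m₁ + m₂) (v₁ + v₂) s := by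
        rw [gaussianReal_apply _ hsum s, ← lintegral_indicator hs]
        congr 1; ext y
        rw [hS1, Set.indicator_apply, Set.indicator_apply]
        split
        · rw [one_mul]
        · rw [zero_mul]

lemma pi_gauss_map_dot {d : ℕ} (v : ℝ≥0) (w : Fin d → ℝ) :
    (Measure.pi fun _ : Fin d => gaussianReal 0 v).map (fun z => ∑ i, w i * z i)
      = gaussianReal 0 (⟨∑ i, (w i)^2, by positivity⟩ * v) := by
  induction d with
  | zero =>
    have hv0 : (⟨∑ i : Fin 0, (w i)^2, by positivity⟩ : ℝ≥0) = 0 := by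
      ext; simp
    have hf : (fun z : Fin 0 → ℝ => ∑ i, w i * z i) = fun _ => (0:ℝ) := by
      ext z; simp
    rw [hf, Measure.map_const, measure_univ, one_smul, ← gaussianReal_zero_var]
    congr 1; ext; simp
    exact (zero_mul (v:ℝ)).symm
  | succ n ih =>
    have hmp := measurePreserving_piFinSuccAbove (fun _ : Fin (n+1) => gaussianReal 0 v) 0
    set e := MeasurableEquiv.piFinSuccAbove (fun _ : Fin (n+1) => ℝ) 0 with he
    have hcomp : (fun z : Fin (n+1) → ℝ => ∑ i, w i * z i)
        = (fun p : ℝ × (Fin n → ℝ) => w 0 * p.1 + ∑ j, w j.succ * p.2 j) ∘ e := by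
      ext z
      simp [he, MeasurableEquiv.piFinSuccAbove, Fin.sum_univ_succ, Fin.zero_succAbove, Fin.tail]
    rw [hcomp, ← Measure.map_map (by fun_prop) e.measurable, hmp.map_eq]
    have hprodmap : ((gaussianReal 0 v).prod
          (Measure.pi fun _ : Fin n => gaussianReal 0 v)).map
          (fun p : ℝ × (Fin n → ℝ) => w 0 * p.1 + ∑ j, w j.succ * p.2 j)
        = Measure.conv (((gaussianReal 0 v)).map (fun a => w 0 * a))
            ((Measure.pi fun _ : Fin n => gaussianReal 0 v).map
              (fun z => ∑ j, w j.succ * z j)) := by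
      rw [Measure.conv, Measure.map_prod_map _ _ (by fun_prop) (by fun_prop),
        Measure.map_map (by fun_prop) (by fun_prop)]
      rfl
    rw [hprodmap, gaussianReal_map_const_mul, ih (fun j => w j.succ), gaussian_conv]
    congr 1
    · simp
    · ext
      push_cast
      show w 0 ^ 2 * (v:ℝ) + (∑ i : Fin n, w i.succ ^ 2) * v = (∑ i, w i ^ 2) * v
      rw [Fin.sum_univ_succ]
      ring

end AuxGauss

/-- In the Gaussian mixture model (`y` uniform on `{-1,1}`, `x = y • w* + z`,
`z` with i.i.d. `N(0,σ²)` coordinates), the (old definition) adversarial 0-1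
risk of the linear classifier `x ↦ wᵀx` against an `L∞` adversary of radius `ε`
equals `Φ((ε‖w‖₁ - wᵀw*)/(σ‖w‖₂))`. -/
theorem gaussian_mixture_adv_risk {d : ℕ} (σ ε : ℝ) (hσ : 0 < σ) (hε : 0 ≤ ε)
    (wstar w : Fin d → ℝ) (hw : w ≠ 0) :
    (1/2) * ((Measure.pi fun _ : Fin d => gaussianReal 0 ⟨σ^2, sq_nonneg σ⟩)
        {z | ∃ δ : Fin d → ℝ, (∀ i, |δ i| ≤ ε) ∧ w ⬝ᵥ (wstar + z + δ) ≤ 0}).toReal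
      + (1/2) * ((Measure.pi fun _ : Fin d => gaussianReal 0 ⟨σ^2, sq_nonneg σ⟩)
        {z | ∃ δ : Fin d → ℝ, (∀ i, |δ i| ≤ ε) ∧ 0 < w ⬝ᵥ (-wstar + z + δ)}).toReal
    = stdGaussCDF ((ε * ∑ i, |w i| - w ⬝ᵥ wstar) / (σ * Real.sqrt (∑ i, (w i)^2))) := by
  classical
  set v : ℝ≥0 := ⟨σ^2, sq_nonneg σ⟩ with hv
  set μd := Measure.pi fun _ : Fin d => gaussianReal 0 v with hμd
  set f : (Fin d → ℝ) → ℝ := fun z => ∑ i, w i * z i with hf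
  have hfm : Measurable f := by
    apply Finset.measurable_sum
    intro i _
    exact (measurable_pi_apply i).const_mul _
  set c : ℝ := ε * ∑ i, |w i| - w ⬝ᵥ wstar with hc
  have hsum_pos : 0 < ∑ i, (w i)^2 := by
    rcases Function.ne_iff.mp hw with ⟨i, hi⟩
    refine Finset.sum_pos' (fun j _ => sq_nonneg _) ⟨i, Finset.mem_univ i, ?_⟩
    exact lt_of_le_of_ne (sq_nonneg _) (Ne.symm (pow_ne_zero 2 hi))
  have hbound : ∀ δ : Fin d → ℝ, (∀ i, |δ i| ≤ ε) → |w ⬝ᵥ δ| ≤ ε * ∑ i, |w i| := by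
    intro δ hδ
    calc |w ⬝ᵥ δ| ≤ ∑ i, |w i * δ i| := Finset.abs_sum_le_sum_abs _ _
      _ ≤ ∑ i, |w i| * ε := by
          refine Finset.sum_le_sum fun i _ => ?_
          rw [abs_mul]
          exact mul_le_mul_of_nonneg_left (hδ i) (abs_nonneg _)
      _ = ε * ∑ i, |w i| := by rw [← Finset.sum_mul]; ring
  set eopt : Fin d → ℝ := fun i => if 0 ≤ w i then ε else -ε with heopt
  have heopt_abs : ∀ i, |eopt i| ≤ ε := by
    intro i
    simp only [heopt]
    by_cases h : 0 ≤ w i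
    · rw [if_pos h, abs_of_nonneg hε]
    · rw [if_neg h, abs_neg, abs_of_nonneg hε]
  have heopt_dot : w ⬝ᵥ eopt = ε * ∑ i, |w i| := by
    have : w ⬝ᵥ eopt = ∑ i, w i * eopt i := rfl
    rw [this, Finset.mul_sum]
    refine Finset.sum_congr rfl fun i _ => ?_
    simp only [heopt]
    by_cases h : 0 ≤ w i
    · rw [if_pos h, abs_of_nonneg h]; ring
    · rw [if_neg h, abs_of_neg (lt_of_not_ge h)]; ring
  have hfz : ∀ z, w ⬝ᵥ z = f z := fun z => rfl
  have hS1 : {z : Fin d → ℝ | ∃ δ : Fin d → ℝ, (∀ i, |δ i| ≤ ε) ∧ w ⬝ᵥ (wstar + z + δ) ≤ 0}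
      = f ⁻¹' Set.Iic c := by
    ext z
    simp only [Set.mem_setOf_eq, Set.mem_preimage, Set.mem_Iic]
    constructor
    · rintro ⟨δ, hδ, hle⟩
      rw [dotProduct_add, dotProduct_add] at hle
      have h2 := (abs_le.mp (hbound δ hδ)).1
      rw [← hfz z, hc]
      linarith
    · intro hz
      refine ⟨-eopt, fun i => by rw [Pi.neg_apply, abs_neg]; exact heopt_abs i, ?_⟩
      rw [dotProduct_add, dotProduct_add, dotProduct_neg, heopt_dot]
      rw [← hfz z, hc] at hz
      linarith
  have hS2 : {z : Fin d → ℝ | ∃ δ : Fin d → ℝ, (∀ i, |δ i| ≤ ε) ∧ 0 < w ⬝ᵥ (-wstar + z + δ)}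
      = f ⁻¹' Set.Ioi (-c) := by
    ext z
    simp only [Set.mem_setOf_eq, Set.mem_preimage, Set.mem_Ioi]
    constructor
    · rintro ⟨δ, hδ, hlt⟩
      rw [dotProduct_add, dotProduct_add, dotProduct_neg] at hlt
      have h2 := (abs_le.mp (hbound δ hδ)).2
      rw [← hfz z, hc]
      linarith
    · intro hz
      refine ⟨eopt, heopt_abs, ?_⟩
      rw [dotProduct_add, dotProduct_add, dotProduct_neg, heopt_dot]
      rw [← hfz z, hc] at hz
      linarith
  set V : ℝ≥0 := ⟨∑ i, (w i)^2, by positivity⟩ * v with hV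
  have hVcoe : (V : ℝ) = (∑ i, (w i)^2) * σ^2 := rfl
  have hVpos : 0 < V := by
    rw [← NNReal.coe_pos, hVcoe]
    have := pow_pos hσ 2
    positivity
  have hVne : V ≠ 0 := hVpos.ne'
  have hmap : μd.map f = gaussianReal 0 V := pi_gauss_map_dot v w
  have hA : μd (f ⁻¹' Set.Iic c) = gaussianReal 0 V (Set.Iic c) := by
    rw [← hmap, Measure.map_apply hfm measurableSet_Iic]
  have hB : μd (f ⁻¹' Set.Ioi (-c)) = gaussianReal 0 V (Set.Ioi (-c)) := by
    rw [← hmap, Measure.map_apply hfm measurableSet_Ioi]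
  have hsing : gaussianReal 0 V {c} = 0 :=
    gaussianReal_absolutelyContinuous 0 hVne (measure_singleton c)
  have hIic : gaussianReal 0 V (Set.Iic c) = gaussianReal 0 V (Set.Iio c) := by
    rw [← Set.Iio_union_right,
      measure_union (by simp) (measurableSet_singleton c), hsing, add_zero]
  have hneg : gaussianReal 0 V (Set.Ioi (-c)) = gaussianReal 0 V (Set.Iio c) := by
    have hone : NNReal.mk ((-1:ℝ)^2) (sq_nonneg _) = 1 := by ext; norm_num
    have hm := gaussianReal_map_const_mul (μ := 0) (v := V) (-1)
    rw [mul_zero, hone, one_mul] at hm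
    conv_lhs => rw [← hm]
    rw [Measure.map_apply (by fun_prop) measurableSet_Ioi]
    congr 1
    ext x
    simp only [Set.mem_preimage, Set.mem_Ioi, Set.mem_Iio]
    constructor <;> intro h <;> linarith
  set s : ℝ := σ * Real.sqrt (∑ i, (w i)^2) with hs
  have hspos : 0 < s := by
    rw [hs]
    exact mul_pos hσ (Real.sqrt_pos.mpr hsum_pos)
  have hsV : NNReal.mk (s^2) (sq_nonneg s) = V := by
    ext
    show s^2 = (V:ℝ)
    rw [hVcoe, hs, mul_pow, Real.sq_sqrt hsum_pos.le]
    ring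
  have hscale : gaussianReal 0 V (Set.Iic c) = gaussianReal 0 1 (Set.Iic (c / s)) := by
    have hm := gaussianReal_map_const_mul (μ := 0) (v := 1) s
    rw [mul_zero, mul_one, hsV] at hm
    rw [← hm, Measure.map_apply (by fun_prop) measurableSet_Iic]
    congr 1
    ext x
    simp only [Set.mem_preimage, Set.mem_Iic]
    rw [le_div_iff₀ hspos, mul_comm]
  rw [hS1, hS2, hA, hB, hneg, ← hIic, hscale]
  rw [stdGaussCDF]
  ring
end
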